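/- With J as in the standard recursion, J(4,k) = (64/3)·16^k + (27/2)·6^k − (250/12)·10^k − 2·4^k − 8·8^k for all k ≥ 0. -/
import Mathlib

/-- `J` satisfies the recursion of Mestre–Oeckl for
`J(n,k) = 2^k (n+k-1)! I(n,k)`. -/
def JRec (J : ℕ → ℤ → ℚ) : Prop :=
  (∀ (n : ℕ) (k : ℤ), k < 0 ∨ n < 1 → J n k = 0) ∧
  J 1 0 = 1 ∧
  ∀ (n k : ℕ), 1 ≤ n → (n, k) ≠ (1, 0) →
    J n k = (n : ℚ) ^ 2 * J n ((k : ℤ) - 1) +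
      (1 / 2) * ∑ i ∈ Finset.Icc 1 (n - 1), ∑ j ∈ Finset.range (k + 1),
        ((n + k - 2).choose (i + j - 1) : ℚ) * (i : ℚ) * ((n - i : ℕ) : ℚ) *
          J i j * J (n - i) ((k : ℤ) - (j : ℤ))

open Finset

lemma sumL1 (y : ℚ) (k : ℕ) :
    ∑ j ∈ range (k+2), ((k+2).choose j : ℚ) * y^(k+2-j) = (1+y)^(k+2) - 1 := by
  have h := add_pow (1:ℚ) y (k+2)
  rw [Finset.sum_range_succ] at h
  simp only [one_pow, one_mul, Nat.choose_self, Nat.cast_one, Nat.sub_self, pow_zero,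
    mul_one] at h
  calc ∑ j ∈ range (k+2), ((k+2).choose j : ℚ) * y^(k+2-j)
      = ∑ j ∈ range (k+2), y^(k+2-j) * ((k+2).choose j : ℚ) :=
        Finset.sum_congr rfl (fun j _ => by ring)
    _ = (1+y)^(k+2) - 1 := by linear_combination -h

lemma sumL2 (x : ℚ) (k : ℕ) :
    ∑ j ∈ range (k+2), ((k+2).choose (j+1) : ℚ) * x^(j+1) = (1+x)^(k+2) - 1 := by
  have h := add_pow x (1:ℚ) (k+2)
  rw [Finset.sum_range_succ'] at h
  simp only [one_pow, mul_one, Nat.choose_zero_right, Nat.cast_one, pow_zero, one_mul] at h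
  calc ∑ j ∈ range (k+2), ((k+2).choose (j+1) : ℚ) * x^(j+1)
      = ∑ j ∈ range (k+2), x^(j+1) * ((k+2).choose (j+1) : ℚ) :=
        Finset.sum_congr rfl (fun j _ => by ring)
    _ = (1+x)^(k+2) - 1 := by rw [show (1:ℚ)+x = x+1 from by ring]; linear_combination -h

lemma sumL3 (y : ℚ) (k : ℕ) :
    ∑ j ∈ range (k+2), ((k+3).choose j : ℚ) * y^(k+3-j)
      = (1+y)^(k+3) - (k+3)*y - 1 := by
  have h := add_pow (1:ℚ) y (k+3)
  rw [Finset.sum_range_succ, Finset.sum_range_succ] at h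
  simp only [one_pow, one_mul, Nat.choose_self, Nat.cast_one, Nat.sub_self, pow_zero,
    mul_one] at h
  rw [show (k+3).choose (k+2) = k+3 from by
        rw [show k+3 = (k+2)+1 from rfl]; exact Nat.choose_succ_self_right _,
      show k+3-(k+2) = 1 from by omega] at h
  calc ∑ j ∈ range (k+2), ((k+3).choose j : ℚ) * y^(k+3-j)
      = ∑ j ∈ range (k+2), y^(k+3-j) * ((k+3).choose j : ℚ) :=
        Finset.sum_congr rfl (fun j _ => by ring)
    _ = (1+y)^(k+3) - (k+3)*y - 1 := by push_cast; push_cast at h; linear_combination -h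

lemma sumL4 (a b : ℚ) (k : ℕ) :
    ∑ j ∈ range (k+2), ((k+3).choose (j+1) : ℚ) * a^(j+1) * b^(k+2-j)
      = (a+b)^(k+3) - a^(k+3) - b^(k+3) := by
  have h := add_pow a b (k+3)
  rw [Finset.sum_range_succ, Finset.sum_range_succ'] at h
  simp only [Nat.choose_self, Nat.cast_one, Nat.sub_self, pow_zero, mul_one, one_mul,
    Nat.choose_zero_right, Nat.sub_zero, zero_add] at h
  calc ∑ j ∈ range (k+2), ((k+3).choose (j+1) : ℚ) * a^(j+1) * b^(k+2-j)
      = ∑ j ∈ range (k+2), a^(j+1) * b^(k+3-(j+1)) * ((k+3).choose (j+1) : ℚ) :=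
        Finset.sum_congr rfl (fun j _ => by rw [show k+3-(j+1) = k+2-j from by omega]; ring)
    _ = (a+b)^(k+3) - a^(k+3) - b^(k+3) := by linear_combination -h

lemma sumL5 (x : ℚ) (k : ℕ) :
    ∑ j ∈ range (k+2), ((k+3).choose (j+2) : ℚ) * x^(j+2)
      = (1+x)^(k+3) - (k+3)*x - 1 := by
  have h := add_pow x (1:ℚ) (k+3)
  rw [Finset.sum_range_succ', Finset.sum_range_succ'] at h
  simp only [one_pow, mul_one, Nat.choose_zero_right, Nat.cast_one, pow_zero, one_mul,
    zero_add, Nat.choose_one_right, pow_one] at h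
  calc ∑ j ∈ range (k+2), ((k+3).choose (j+2) : ℚ) * x^(j+2)
      = ∑ j ∈ range (k+2), x^(j+1+1) * ((k+3).choose (j+1+1) : ℚ) :=
        Finset.sum_congr rfl (fun j _ => by rw [show j+1+1 = j+2 from by omega]; ring)
    _ = (1+x)^(k+3) - (k+3)*x - 1 := by
        rw [show (1:ℚ)+x = x+1 from by ring]; push_cast; push_cast at h; linear_combination -h

lemma J_one (J : ℕ → ℤ → ℚ) (hJ : JRec J) : ∀ k : ℕ, J 1 k = 1 := by
  obtain ⟨h0, h1, hrec⟩ := hJ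
  intro k
  induction k with
  | zero => exact_mod_cast h1
  | succ k ih =>
    have h := hrec 1 (k+1) le_rfl (by simp)
    simp only [show (1:ℕ) - 1 = 0 from rfl, Finset.Icc_self, Finset.Icc_eq_empty_of_lt,
      show Finset.Icc 1 0 = (∅ : Finset ℕ) from rfl, Finset.sum_empty, mul_zero, add_zero] at h
    rw [show (((k+1:ℕ):ℤ) - 1) = ((k:ℕ):ℤ) from by push_cast; ring] at h
    rw [h, ih]; norm_num

lemma J_two (J : ℕ → ℤ → ℚ) (hJ : JRec J) : ∀ k : ℕ, J 2 k = 4^k - 2^k/2 := by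
  obtain ⟨h0, h1, hrec⟩ := hJ
  have hJ' : JRec J := ⟨h0, h1, hrec⟩
  intro k
  induction k with
  | zero =>
    have h := hrec 2 0 (by norm_num) (by simp)
    simp only [Finset.range_one, Finset.sum_singleton, show (2:ℕ)-1 = 1 from rfl,
      Finset.Icc_self] at h
    rw [h0 2 (((0:ℕ):ℤ) - 1) (by norm_num)] at h
    norm_num [h1] at h
    push_cast
    rw [h]; norm_num
  | succ k ih =>
    have h := hrec 2 (k+1) (by norm_num) (by simp)
    simp only [show (2:ℕ)-1 = 1 from rfl, Finset.Icc_self, Finset.sum_singleton] at h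
    rw [show (((k+1:ℕ):ℤ) - 1) = ((k:ℕ):ℤ) from by push_cast; ring] at h
    have hsum : ∑ j ∈ Finset.range (k+1+1),
        ((2 + (k+1) - 2).choose (1 + j - 1) : ℚ) * ((1:ℕ):ℚ) * ((1:ℕ):ℚ) *
          J 1 (j:ℤ) * J 1 (((k+1:ℕ):ℤ) - (j:ℤ))
        = ∑ j ∈ Finset.range (k+2), ((k+1).choose j : ℚ) := by
      apply Finset.sum_congr (by norm_num)
      intro j hj
      have hjle : j ≤ k+1 := by
        simpa [Nat.lt_succ_iff] using Finset.mem_range.mp hj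
      rw [show (2 + (k+1) - 2) = k+1 from by omega, show 1 + j - 1 = j from by omega,
        J_one J hJ' j,
        show (((k+1:ℕ):ℤ) - (j:ℤ)) = ((k+1-j:ℕ):ℤ) from by
          push_cast [Nat.cast_sub hjle]; ring,
        J_one J hJ' (k+1-j)]
      norm_num
    rw [hsum] at h
    have hb : ∑ j ∈ Finset.range (k+2), ((k+1).choose j : ℚ) = 2^(k+1) := by
      rw [← Nat.cast_sum]
      rw [Nat.sum_range_choose]
      push_cast; ring
    rw [hb, ih] at h
    rw [h]; push_cast; ring

lemma J_three (J : ℕ → ℤ → ℚ) (hJ : JRec J) :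
    ∀ k : ℕ, J 3 k = 27/8*9^k - 25/8*5^k + 3/4*3^k := by
  obtain ⟨h0, h1, hrec⟩ := hJ
  have hJ' : JRec J := ⟨h0, h1, hrec⟩
  have e1 : J 1 (0:ℤ) = 1 := by simpa using J_one J hJ' 0
  have e2 : J 2 (0:ℤ) = 1/2 := by have := J_two J hJ' 0; norm_num at this; simpa using this
  intro k
  induction k with
  | zero =>
    have h := hrec 3 0 (by norm_num) (by simp)
    rw [h0 3 (((0:ℕ):ℤ) - 1) (by norm_num)] at h
    rw [show Finset.Icc 1 (3-1) = {1,2} from rfl] at h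
    rw [Finset.sum_insert (by decide), Finset.sum_singleton] at h
    norm_num [e1, e2] at h
    push_cast
    rw [h]; norm_num
  | succ k ih =>
    have h := hrec 3 (k+1) (by norm_num) (by simp)
    rw [show (((k+1:ℕ):ℤ) - 1) = ((k:ℕ):ℤ) from by push_cast; ring] at h
    rw [show Finset.Icc 1 (3-1) = {1,2} from rfl] at h
    rw [Finset.sum_insert (by decide), Finset.sum_singleton] at h
    have i1 : (∑ j ∈ Finset.range (k+1+1),
        ((3 + (k+1) - 2).choose (1 + j - 1) : ℚ) * ((1:ℕ):ℚ) * ((3-1:ℕ):ℚ) *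
          J 1 (j:ℤ) * J (3-1) (((k+1:ℕ):ℤ) - (j:ℤ)))
        = (1/2)*((1+4:ℚ)^(k+2) - 1) - (1/2)*((1+2:ℚ)^(k+2) - 1) := by
      calc (∑ j ∈ Finset.range (k+1+1),
          ((3 + (k+1) - 2).choose (1 + j - 1) : ℚ) * ((1:ℕ):ℚ) * ((3-1:ℕ):ℚ) *
            J 1 (j:ℤ) * J (3-1) (((k+1:ℕ):ℤ) - (j:ℤ)))
          = ∑ j ∈ Finset.range (k+2),
            ((1/2)*(((k+2).choose j : ℚ) * 4^(k+2-j)) - (1/2)*(((k+2).choose j : ℚ) * 2^(k+2-j))) := by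
            apply Finset.sum_congr (by norm_num)
            intro j hj
            have hjle : j ≤ k+1 := by simpa [Nat.lt_succ_iff] using Finset.mem_range.mp hj
            rw [show (3 + (k+1) - 2) = k+2 from by omega, show 1+j-1 = j from by omega,
              J_one J hJ' j, show (3-1:ℕ) = 2 from rfl,
              show (((k+1:ℕ):ℤ) - (j:ℤ)) = ((k+1-j:ℕ):ℤ) from by
                push_cast [Nat.cast_sub hjle]; ring,
              J_two J hJ' (k+1-j),
              show k+2-j = (k+1-j)+1 from by omega, pow_succ, pow_succ]
            push_cast; ring
        _ = (1/2)*((1+4:ℚ)^(k+2) - 1) - (1/2)*((1+2:ℚ)^(k+2) - 1) := by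
            rw [Finset.sum_sub_distrib, ← Finset.mul_sum, ← Finset.mul_sum, sumL1, sumL1]
    have i2 : (∑ j ∈ Finset.range (k+1+1),
        ((3 + (k+1) - 2).choose (2 + j - 1) : ℚ) * ((2:ℕ):ℚ) * ((3-2:ℕ):ℚ) *
          J 2 (j:ℤ) * J (3-2) (((k+1:ℕ):ℤ) - (j:ℤ)))
        = (1/2)*((1+4:ℚ)^(k+2) - 1) - (1/2)*((1+2:ℚ)^(k+2) - 1) := by
      calc (∑ j ∈ Finset.range (k+1+1),
          ((3 + (k+1) - 2).choose (2 + j - 1) : ℚ) * ((2:ℕ):ℚ) * ((3-2:ℕ):ℚ) *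
            J 2 (j:ℤ) * J (3-2) (((k+1:ℕ):ℤ) - (j:ℤ)))
          = ∑ j ∈ Finset.range (k+2),
            ((1/2)*(((k+2).choose (j+1) : ℚ) * 4^(j+1)) - (1/2)*(((k+2).choose (j+1) : ℚ) * 2^(j+1))) := by
            apply Finset.sum_congr (by norm_num)
            intro j hj
            have hjle : j ≤ k+1 := by simpa [Nat.lt_succ_iff] using Finset.mem_range.mp hj
            rw [show (3 + (k+1) - 2) = k+2 from by omega, show 2+j-1 = j+1 from by omega,
              J_two J hJ' j, show (3-2:ℕ) = 1 from rfl,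
              show (((k+1:ℕ):ℤ) - (j:ℤ)) = ((k+1-j:ℕ):ℤ) from by
                push_cast [Nat.cast_sub hjle]; ring,
              J_one J hJ' (k+1-j), pow_succ, pow_succ]
            push_cast; ring
        _ = (1/2)*((1+4:ℚ)^(k+2) - 1) - (1/2)*((1+2:ℚ)^(k+2) - 1) := by
            rw [Finset.sum_sub_distrib, ← Finset.mul_sum, ← Finset.mul_sum, sumL2, sumL2]
    rw [i1, i2, ih] at h
    rw [h]; push_cast; ring

theorem J_four_k (J : ℕ → ℤ → ℚ) (hJ : JRec J) :
    ∀ k : ℕ, J 4 k = (64 / 3) * 16 ^ k + (27 / 2) * 6 ^ k - (250 / 12) * 10 ^ k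
      - 2 * 4 ^ k - 8 * 8 ^ k := by
  obtain ⟨h0, h1, hrec⟩ := hJ
  have hJ' : JRec J := ⟨h0, h1, hrec⟩
  have e1 : J 1 (0:ℤ) = 1 := by simpa using J_one J hJ' 0
  have e2 : J 2 (0:ℤ) = 1/2 := by have := J_two J hJ' 0; norm_num at this; simpa using this
  have e3 : J 3 (0:ℤ) = 1 := by have := J_three J hJ' 0; norm_num at this; simpa using this
  intro k
  induction k with
  | zero =>
    have h := hrec 4 0 (by norm_num) (by simp)
    rw [h0 4 (((0:ℕ):ℤ) - 1) (by norm_num)] at h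
    rw [show Finset.Icc 1 (4-1) = {1,2,3} from rfl] at h
    rw [Finset.sum_insert (by decide), Finset.sum_insert (by decide),
      Finset.sum_singleton] at h
    norm_num [e1, e2, e3] at h
    push_cast
    rw [h]; norm_num
  | succ k ih =>
    have h := hrec 4 (k+1) (by norm_num) (by simp)
    rw [show (((k+1:ℕ):ℤ) - 1) = ((k:ℕ):ℤ) from by push_cast; ring] at h
    rw [show Finset.Icc 1 (4-1) = {1,2,3} from rfl] at h
    rw [Finset.sum_insert (by decide), Finset.sum_insert (by decide),
      Finset.sum_singleton] at h
    have i1 : (∑ j ∈ Finset.range (k+1+1),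
        ((4 + (k+1) - 2).choose (1 + j - 1) : ℚ) * ((1:ℕ):ℚ) * ((4-1:ℕ):ℚ) *
          J 1 (j:ℤ) * J (4-1) (((k+1:ℕ):ℤ) - (j:ℤ)))
        = (1/8)*((1+9:ℚ)^(k+3) - (k+3)*9 - 1) - (3/8)*((1+5:ℚ)^(k+3) - (k+3)*5 - 1)
          + (1/4)*((1+3:ℚ)^(k+3) - (k+3)*3 - 1) := by
      calc (∑ j ∈ Finset.range (k+1+1),
          ((4 + (k+1) - 2).choose (1 + j - 1) : ℚ) * ((1:ℕ):ℚ) * ((4-1:ℕ):ℚ) *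
            J 1 (j:ℤ) * J (4-1) (((k+1:ℕ):ℤ) - (j:ℤ)))
          = ∑ j ∈ Finset.range (k+2),
            ((1/8)*(((k+3).choose j : ℚ) * 9^(k+3-j))
              - (3/8)*(((k+3).choose j : ℚ) * 5^(k+3-j))
              + (1/4)*(((k+3).choose j : ℚ) * 3^(k+3-j))) := by
            apply Finset.sum_congr (by norm_num)
            intro j hj
            have hjle : j ≤ k+1 := by simpa [Nat.lt_succ_iff] using Finset.mem_range.mp hj
            rw [show (4 + (k+1) - 2) = k+3 from by omega, show 1+j-1 = j from by omega,
              J_one J hJ' j, show (4-1:ℕ) = 3 from rfl,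
              show (((k+1:ℕ):ℤ) - (j:ℤ)) = ((k+1-j:ℕ):ℤ) from by
                push_cast [Nat.cast_sub hjle]; ring,
              J_three J hJ' (k+1-j),
              show k+3-j = (k+1-j)+2 from by omega, pow_add, pow_add, pow_add]
            push_cast; ring
        _ = (1/8)*((1+9:ℚ)^(k+3) - (k+3)*9 - 1) - (3/8)*((1+5:ℚ)^(k+3) - (k+3)*5 - 1)
            + (1/4)*((1+3:ℚ)^(k+3) - (k+3)*3 - 1) := by
            rw [Finset.sum_add_distrib, Finset.sum_sub_distrib,
              ← Finset.mul_sum, ← Finset.mul_sum, ← Finset.mul_sum,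
              sumL3, sumL3, sumL3]
    have i2 : (∑ j ∈ Finset.range (k+1+1),
        ((4 + (k+1) - 2).choose (2 + j - 1) : ℚ) * ((2:ℕ):ℚ) * ((4-2:ℕ):ℚ) *
          J 2 (j:ℤ) * J (4-2) (((k+1:ℕ):ℤ) - (j:ℤ)))
        = (1/4)*((4+4:ℚ)^(k+3) - (4:ℚ)^(k+3) - (4:ℚ)^(k+3))
          - (1/4)*((4+2:ℚ)^(k+3) - (4:ℚ)^(k+3) - (2:ℚ)^(k+3))
          - (1/4)*((2+4:ℚ)^(k+3) - (2:ℚ)^(k+3) - (4:ℚ)^(k+3))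
          + (1/4)*((2+2:ℚ)^(k+3) - (2:ℚ)^(k+3) - (2:ℚ)^(k+3)) := by
      calc (∑ j ∈ Finset.range (k+1+1),
          ((4 + (k+1) - 2).choose (2 + j - 1) : ℚ) * ((2:ℕ):ℚ) * ((4-2:ℕ):ℚ) *
            J 2 (j:ℤ) * J (4-2) (((k+1:ℕ):ℤ) - (j:ℤ)))
          = ∑ j ∈ Finset.range (k+2),
            ((1/4)*(((k+3).choose (j+1) : ℚ) * 4^(j+1) * 4^(k+2-j))
              - (1/4)*(((k+3).choose (j+1) : ℚ) * 4^(j+1) * 2^(k+2-j))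
              - (1/4)*(((k+3).choose (j+1) : ℚ) * 2^(j+1) * 4^(k+2-j))
              + (1/4)*(((k+3).choose (j+1) : ℚ) * 2^(j+1) * 2^(k+2-j))) := by
            apply Finset.sum_congr (by norm_num)
            intro j hj
            have hjle : j ≤ k+1 := by simpa [Nat.lt_succ_iff] using Finset.mem_range.mp hj
            rw [show (4 + (k+1) - 2) = k+3 from by omega, show 2+j-1 = j+1 from by omega,
              J_two J hJ' j, show (4-2:ℕ) = 2 from rfl,
              show (((k+1:ℕ):ℤ) - (j:ℤ)) = ((k+1-j:ℕ):ℤ) from by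
                push_cast [Nat.cast_sub hjle]; ring,
              J_two J hJ' (k+1-j),
              show k+2-j = (k+1-j)+1 from by omega, pow_succ, pow_succ, pow_succ, pow_succ]
            push_cast; ring
        _ = _ := by
            rw [Finset.sum_add_distrib, Finset.sum_sub_distrib, Finset.sum_sub_distrib,
              ← Finset.mul_sum, ← Finset.mul_sum, ← Finset.mul_sum, ← Finset.mul_sum,
              sumL4, sumL4, sumL4, sumL4]
    have i3 : (∑ j ∈ Finset.range (k+1+1),
        ((4 + (k+1) - 2).choose (3 + j - 1) : ℚ) * ((3:ℕ):ℚ) * ((4-3:ℕ):ℚ) *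
          J 3 (j:ℤ) * J (4-3) (((k+1:ℕ):ℤ) - (j:ℤ)))
        = (1/8)*((1+9:ℚ)^(k+3) - (k+3)*9 - 1) - (3/8)*((1+5:ℚ)^(k+3) - (k+3)*5 - 1)
          + (1/4)*((1+3:ℚ)^(k+3) - (k+3)*3 - 1) := by
      calc (∑ j ∈ Finset.range (k+1+1),
          ((4 + (k+1) - 2).choose (3 + j - 1) : ℚ) * ((3:ℕ):ℚ) * ((4-3:ℕ):ℚ) *
            J 3 (j:ℤ) * J (4-3) (((k+1:ℕ):ℤ) - (j:ℤ)))
          = ∑ j ∈ Finset.range (k+2),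
            ((1/8)*(((k+3).choose (j+2) : ℚ) * 9^(j+2))
              - (3/8)*(((k+3).choose (j+2) : ℚ) * 5^(j+2))
              + (1/4)*(((k+3).choose (j+2) : ℚ) * 3^(j+2))) := by
            apply Finset.sum_congr (by norm_num)
            intro j hj
            have hjle : j ≤ k+1 := by simpa [Nat.lt_succ_iff] using Finset.mem_range.mp hj
            rw [show (4 + (k+1) - 2) = k+3 from by omega, show 3+j-1 = j+2 from by omega,
              J_three J hJ' j, show (4-3:ℕ) = 1 from rfl,
              show (((k+1:ℕ):ℤ) - (j:ℤ)) = ((k+1-j:ℕ):ℤ) from by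
                push_cast [Nat.cast_sub hjle]; ring,
              J_one J hJ' (k+1-j), pow_add, pow_add, pow_add]
            push_cast; ring
        _ = _ := by
            rw [Finset.sum_add_distrib, Finset.sum_sub_distrib,
              ← Finset.mul_sum, ← Finset.mul_sum, ← Finset.mul_sum,
              sumL5, sumL5, sumL5]
    rw [i1, i2, i3, ih] at h
    rw [h]; push_cast; ring
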